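/- For every x ∈ ℝ^d the random variable f(F_t(x, ·)) is integrable, the function u(x) := 𝔼[ f(F_t(x, ·)) ] is differentiable on ℝ^d, and its gradient admits the representation ∇u(x) = 𝔼[ S_t(x, ·)ᵀ ∇f(F_t(x, ·)) ] (that is, ∇P^t f = Q^t ∇f, where Q^t g(x) := 𝔼[ S_t(x,·)ᵀ g(F_t(x,·)) ]). -/

import Mathlib

open MeasureTheory

/-- The random flow driven by noise `N`: `rflow a N 0 x ω = x`,
`rflow a N (s+1) x ω = a (rflow a N s x ω) (N (s+1) ω)`. -/
def rflow {E M Ω : Type*} (a : E → M → E) (N : ℕ → Ω → M) : ℕ → E → Ω → E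
  | 0 => fun x _ => x
  | s + 1 => fun x ω => a (rflow a N s x ω) (N (s + 1) ω)

open InnerProductSpace
section Aux
set_option linter.unusedSectionVars false
variable {Ω : Type*} [MeasurableSpace Ω] {d m : ℕ}
  (a : EuclideanSpace ℝ (Fin d) → (Fin m → ℝ) → EuclideanSpace ℝ (Fin d))
  (N : ℕ → Ω → Fin m → ℝ)

lemma rflow_diff (haC1 : ∀ n, ContDiff ℝ 1 (fun x => a x n)) (s : ℕ) (ω : Ω) :
    Differentiable ℝ (fun x => rflow a N s x ω) := by
  induction s with
  | zero => exact differentiable_id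
  | succ s ih => exact ((haC1 (N (s + 1) ω)).differentiable one_ne_zero).comp ih

lemma rflow_fderiv (haC1 : ∀ n, ContDiff ℝ 1 (fun x => a x n)) (s : ℕ) (ω : Ω)
    (x : EuclideanSpace ℝ (Fin d)) :
    fderiv ℝ (fun y => rflow a N (s + 1) y ω) x
      = (fderiv ℝ (fun z => a z (N (s + 1) ω)) (rflow a N s x ω)).comp
          (fderiv ℝ (fun y => rflow a N s y ω) x) :=
  fderiv_comp x (((haC1 _).differentiable one_ne_zero) _) (rflow_diff a N haC1 s ω x)

lemma rflow_meas
    (hameas : Measurable fun p : EuclideanSpace ℝ (Fin d) × (Fin m → ℝ) => a p.1 p.2)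
    (hN : ∀ s, Measurable (N s)) (s : ℕ) (x : EuclideanSpace ℝ (Fin d)) :
    Measurable (fun ω => rflow a N s x ω) := by
  induction s with
  | zero => exact measurable_const
  | succ s ih => exact hameas.comp (ih.prodMk (hN (s + 1)))

lemma rflow_fderiv_meas
    (hameas : Measurable fun p : EuclideanSpace ℝ (Fin d) × (Fin m → ℝ) => a p.1 p.2)
    (hN : ∀ s, Measurable (N s)) (haC1 : ∀ n, ContDiff ℝ 1 (fun x => a x n))
    (hDmeas : Measurable fun p : EuclideanSpace ℝ (Fin d) × (Fin m → ℝ) =>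
      fderiv ℝ (fun x => a x p.2) p.1)
    (s : ℕ) (x : EuclideanSpace ℝ (Fin d)) :
    Measurable (fun ω => fderiv ℝ (fun y => rflow a N s y ω) x) := by
  induction s with
  | zero =>
    have : (fun ω : Ω => fderiv ℝ (fun y : EuclideanSpace ℝ (Fin d) => rflow a N 0 y ω) x)
        = fun _ => ContinuousLinearMap.id ℝ _ := by
      funext ω
      exact fderiv_id
    rw [this]; exact measurable_const
  | succ s ih =>
    have heq : (fun ω => fderiv ℝ (fun y => rflow a N (s + 1) y ω) x)
        = fun ω => (fderiv ℝ (fun z => a z (N (s + 1) ω)) (rflow a N s x ω)).comp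
            (fderiv ℝ (fun y => rflow a N s y ω) x) := by
      funext ω; exact rflow_fderiv a N haC1 s ω x
    rw [heq]
    have h1 : Measurable (fun ω => fderiv ℝ (fun z => a z (N (s + 1) ω)) (rflow a N s x ω)) :=
      hDmeas.comp ((rflow_meas a N hameas hN s x).prodMk (hN (s + 1)))
    exact (isBoundedBilinearMap_comp (𝕜 := ℝ)).continuous.measurable.comp (h1.prodMk ih)

lemma rflow_fderiv_norm (haC1 : ∀ n, ContDiff ℝ 1 (fun x => a x n)) {L : ℝ}
    (hL : ∀ x n, ‖fderiv ℝ (fun y => a y n) x‖ ≤ L) (hL0 : 0 ≤ L)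
    (s : ℕ) (ω : Ω) (x : EuclideanSpace ℝ (Fin d)) :
    ‖fderiv ℝ (fun y => rflow a N s y ω) x‖ ≤ L ^ s := by
  induction s with
  | zero =>
    have : fderiv ℝ (fun y : EuclideanSpace ℝ (Fin d) => rflow a N 0 y ω) x
        = ContinuousLinearMap.id ℝ _ := fderiv_id
    rw [this, pow_zero]
    exact ContinuousLinearMap.norm_id_le
  | succ s ih =>
    rw [rflow_fderiv a N haC1 s ω x, pow_succ']
    calc ‖(fderiv ℝ (fun z => a z (N (s + 1) ω)) (rflow a N s x ω)).comp
          (fderiv ℝ (fun y => rflow a N s y ω) x)‖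
        ≤ ‖fderiv ℝ (fun z => a z (N (s + 1) ω)) (rflow a N s x ω)‖
          * ‖fderiv ℝ (fun y => rflow a N s y ω) x‖ := ContinuousLinearMap.opNorm_comp_le _ _
      _ ≤ L * L ^ s := mul_le_mul (hL _ _) ih (norm_nonneg _) hL0

end Aux

/-- `f(F_t(x,·))` is integrable, `u(x) = 𝔼[f(F_t(x,·))]` is differentiable,
and `∇u(x) = 𝔼[S_t(x,·)ᵀ ∇f(F_t(x,·))]`, where `S_t(x,ω)` is the Jacobian of `F_t(·,ω)`
at `x` (i.e. `∇P^t f = Q^t ∇f`). -/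
theorem gradient_of_expected_value_representation
    {Ω : Type*} [MeasurableSpace Ω] (ℙ : Measure Ω) [IsProbabilityMeasure ℙ]
    (d m : ℕ) (t : ℕ) (ht : 1 ≤ t)
    (N : ℕ → Ω → Fin m → ℝ) (hN : ∀ s, Measurable (N s))
    (L : ℝ)
    (a : EuclideanSpace ℝ (Fin d) → (Fin m → ℝ) → EuclideanSpace ℝ (Fin d))
    (hameas : Measurable fun p : EuclideanSpace ℝ (Fin d) × (Fin m → ℝ) => a p.1 p.2)
    (haC1 : ∀ n, ContDiff ℝ 1 (fun x => a x n))
    (hDmeas : Measurable fun p : EuclideanSpace ℝ (Fin d) × (Fin m → ℝ) =>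
      fderiv ℝ (fun x => a x p.2) p.1)
    (hL : ∀ x n, ‖fderiv ℝ (fun y => a y n) x‖ ≤ L)
    (f : EuclideanSpace ℝ (Fin d) → ℝ) (hf : ContDiff ℝ 1 f)
    (C : ℝ) (hfC : ∀ y, ‖gradient f y‖ ≤ C)
    (hint0 : ∃ x₀, Integrable (fun ω => f (rflow a N t x₀ ω)) ℙ) :
    (∀ x, Integrable (fun ω => f (rflow a N t x ω)) ℙ) ∧
    Differentiable ℝ (fun x => ∫ ω, f (rflow a N t x ω) ∂ℙ) ∧
    ∀ x, gradient (fun x => ∫ ω, f (rflow a N t x ω) ∂ℙ) x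
      = ∫ ω, ContinuousLinearMap.adjoint (fderiv ℝ (fun y => rflow a N t y ω) x)
          (gradient f (rflow a N t x ω)) ∂ℙ := by
  obtain ⟨x₀, hx₀⟩ := hint0
  have hL0 : 0 ≤ L := le_trans (norm_nonneg _) (hL 0 0)
  have hC0 : 0 ≤ C := le_trans (norm_nonneg _) (hfC 0)
  have hfd : ∀ y, ‖fderiv ℝ f y‖ ≤ C := by
    intro y
    have := hfC y
    rwa [gradient, LinearIsometryEquiv.norm_map] at this
  have hlipf : ∀ y z : EuclideanSpace ℝ (Fin d), ‖f y - f z‖ ≤ C * ‖y - z‖ := fun y z =>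
    Convex.norm_image_sub_le_of_norm_fderiv_le
      (fun w _ => (hf.differentiable one_ne_zero) w) (fun w _ => hfd w)
      convex_univ (Set.mem_univ z) (Set.mem_univ y)
  have hlipflow : ∀ (ω : Ω) (y z : EuclideanSpace ℝ (Fin d)),
      ‖rflow a N t y ω - rflow a N t z ω‖ ≤ L ^ t * ‖y - z‖ := fun ω y z =>
    Convex.norm_image_sub_le_of_norm_fderiv_le
      (fun w _ => rflow_diff a N haC1 t ω w) (fun w _ => rflow_fderiv_norm a N haC1 hL hL0 t ω w)
      convex_univ (Set.mem_univ z) (Set.mem_univ y)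
  have hmeasf : ∀ x, AEStronglyMeasurable (fun ω => f (rflow a N t x ω)) ℙ := fun x =>
    ((hf.continuous.measurable).comp (rflow_meas a N hameas hN t x)).aestronglyMeasurable
  -- Part 1: integrability
  have hint : ∀ x, Integrable (fun ω => f (rflow a N t x ω)) ℙ := by
    intro x
    have hdint : Integrable (fun ω => f (rflow a N t x ω) - f (rflow a N t x₀ ω)) ℙ := by
      refine Integrable.mono' (integrable_const (C * (L ^ t * ‖x - x₀‖)))
        ((hmeasf x).sub (hmeasf x₀)) (Filter.Eventually.of_forall fun ω => ?_)
      calc ‖f (rflow a N t x ω) - f (rflow a N t x₀ ω)‖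
          ≤ C * ‖rflow a N t x ω - rflow a N t x₀ ω‖ := hlipf _ _
        _ ≤ C * (L ^ t * ‖x - x₀‖) := by
            exact mul_le_mul_of_nonneg_left (hlipflow ω x x₀) hC0
    have heq : (fun ω => f (rflow a N t x ω))
        = (fun ω => f (rflow a N t x ω) - f (rflow a N t x₀ ω))
          + fun ω => f (rflow a N t x₀ ω) := by
      funext ω; simp
    rw [heq]
    exact hdint.add hx₀
  have key : ∀ x, HasFDerivAt (fun x => ∫ ω, f (rflow a N t x ω) ∂ℙ)
      (∫ ω, (fderiv ℝ f (rflow a N t x ω)).comp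
        (fderiv ℝ (fun y => rflow a N t y ω) x) ∂ℙ) x := by
    intro x
    have hF'_meas : AEStronglyMeasurable (fun ω =>
        (fderiv ℝ f (rflow a N t x ω)).comp (fderiv ℝ (fun y => rflow a N t y ω) x)) ℙ := by
      have h2 : Measurable (fun ω => fderiv ℝ f (rflow a N t x ω)) :=
        ((hf.continuous_fderiv one_ne_zero).measurable).comp (rflow_meas a N hameas hN t x)
      exact ((isBoundedBilinearMap_comp (𝕜 := ℝ)).continuous.measurable.comp
        (h2.prodMk (rflow_fderiv_meas a N hameas hN haC1 hDmeas t x))).aestronglyMeasurable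
    refine hasFDerivAt_integral_of_dominated_of_fderiv_le (s := Metric.ball x 1)
      (F' := fun y ω => (fderiv ℝ f (rflow a N t y ω)).comp
        (fderiv ℝ (fun z => rflow a N t z ω) y)) (Metric.ball_mem_nhds x one_pos)
      (Filter.Eventually.of_forall fun y => hmeasf y) (hint x) hF'_meas
      (Filter.Eventually.of_forall fun ω y _ => ?_) (integrable_const (C * L ^ t))
      (Filter.Eventually.of_forall fun ω y _ => ?_)
    · calc ‖(fderiv ℝ f (rflow a N t y ω)).comp (fderiv ℝ (fun z => rflow a N t z ω) y)‖
          ≤ ‖fderiv ℝ f (rflow a N t y ω)‖ * ‖fderiv ℝ (fun z => rflow a N t z ω) y‖ :=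
            ContinuousLinearMap.opNorm_comp_le _ _
        _ ≤ C * L ^ t := mul_le_mul (hfd _) (rflow_fderiv_norm a N haC1 hL hL0 t ω y)
            (norm_nonneg _) hC0
    · exact (((hf.differentiable one_ne_zero) _).hasFDerivAt).comp y
        ((rflow_diff a N haC1 t ω y).hasFDerivAt)
  refine ⟨hint, ?_, ?_⟩
  · exact fun x => (key x).differentiableAt
  · intro x
    have hgrad := (key x).hasGradientAt.gradient
    have hswap := (toDual ℝ (EuclideanSpace ℝ (Fin d))).symm.toContinuousLinearEquiv.integral_comp_comm
      (μ := ℙ) (φ := fun ω => (fderiv ℝ f (rflow a N t x ω)).comp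
        (fderiv ℝ (fun y => rflow a N t y ω) x))
    simp only [LinearIsometryEquiv.coe_toContinuousLinearEquiv] at hswap
    rw [hgrad, ← hswap]
    congr 1
    funext ω
    apply ext_inner_right ℝ
    intro v
    rw [toDual_symm_apply, ContinuousLinearMap.adjoint_inner_left]
    rw [gradient, toDual_symm_apply]
    rfl
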